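/- arXiv:0907.3435 — 3 statements merged into one kernel-verified Lean document; each statement's English description precedes it below -/
import Mathlib

section
/- The elements x = ε²+ε̄² and z = εαε̄ᾱ + αε̄ᾱε + ε̄ᾱεα + ᾱεαε̄ are central in E, i.e. x and z commute with every element of E (these are homogeneous elements of even degrees 2 and 4, so this is equivalent to their lying in the graded centre of E). -/
open FreeAlgebra

inductive Gen : Type | e1 | e2 | ep | eb | al | ab

variable (K : Type) [Field K]

/-- Relations presenting the preprojective algebra `E = KQ/⟨ε²+αᾱ, ε̄²+ᾱα⟩` of type `T̃₂`,
the Ext algebra of the tame Hecke algebra `A`. -/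
inductive RelE : FreeAlgebra K Gen → FreeAlgebra K Gen → Prop
  | sum : RelE (ι K .e1 + ι K .e2) 1
  | idem1 : RelE (ι K .e1 * ι K .e1) (ι K .e1)
  | idem2 : RelE (ι K .e2 * ι K .e2) (ι K .e2)
  | orth12 : RelE (ι K .e1 * ι K .e2) 0
  | orth21 : RelE (ι K .e2 * ι K .e1) 0
  | ep_l : RelE (ι K .e1 * ι K .ep) (ι K .ep)
  | ep_r : RelE (ι K .ep * ι K .e1) (ι K .ep)
  | eb_l : RelE (ι K .e2 * ι K .eb) (ι K .eb)
  | eb_r : RelE (ι K .eb * ι K .e2) (ι K .eb)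
  | al_l : RelE (ι K .e1 * ι K .al) (ι K .al)
  | al_r : RelE (ι K .al * ι K .e2) (ι K .al)
  | ab_l : RelE (ι K .e2 * ι K .ab) (ι K .ab)
  | ab_r : RelE (ι K .ab * ι K .e1) (ι K .ab)
  | rel1 : RelE (ι K .ep * ι K .ep + ι K .al * ι K .ab) 0
  | rel2 : RelE (ι K .eb * ι K .eb + ι K .ab * ι K .al) 0

/-- The preprojective algebra of type `T̃₂`. -/
abbrev PreprojE : Type := RingQuot (RelE K)

namespace PreprojE

noncomputable def of (g : Gen) : PreprojE K := RingQuot.mkAlgHom K (RelE K) (ι K g)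

noncomputable abbrev e₁ : PreprojE K := of K .e1
noncomputable abbrev e₂ : PreprojE K := of K .e2
noncomputable abbrev ε : PreprojE K := of K .ep
noncomputable abbrev εb : PreprojE K := of K .eb
noncomputable abbrev α : PreprojE K := of K .al
noncomputable abbrev αb : PreprojE K := of K .ab

/-- The central element `x = ε² + ε̄²`. -/
noncomputable def x : PreprojE K := ε K ^ 2 + εb K ^ 2

/-- The central element `z = εαε̄ᾱ + αε̄ᾱε + ε̄ᾱεα + ᾱεαε̄`. -/
noncomputable def z : PreprojE K :=
  ε K * α K * εb K * αb K + α K * εb K * αb K * ε K +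
    εb K * αb K * ε K * α K + αb K * ε K * α K * εb K

/-- The 16-element generating set `S`. -/
noncomputable def S : Set (PreprojE K) :=
  {e₁ K, e₂ K, ε K, α K, εb K, αb K, ε K * α K, εb K * αb K, α K * εb K, αb K * ε K,
    ε K * α K * εb K, εb K * αb K * ε K, αb K * ε K * α K, α K * εb K * αb K,
    ε K * α K * εb K * αb K, εb K * αb K * ε K * α K}

end PreprojE

namespace PreprojE
variable {K : Type} [Field K]

private lemma relq {a b : FreeAlgebra K Gen} (h : RelE K a b) :
    RingQuot.mkAlgHom K (RelE K) a = RingQuot.mkAlgHom K (RelE K) b :=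
  RingQuot.mkAlgHom_rel K h

private lemma hsum : e₁ K + e₂ K = 1 := by
  simpa [of] using relq (RelE.sum (K := K))

private lemma h11 : e₁ K * e₁ K = e₁ K := by simpa [of] using relq (RelE.idem1 (K := K))
private lemma h22 : e₂ K * e₂ K = e₂ K := by simpa [of] using relq (RelE.idem2 (K := K))
private lemma h12 : e₁ K * e₂ K = 0 := by simpa [of] using relq (RelE.orth12 (K := K))
private lemma h21 : e₂ K * e₁ K = 0 := by simpa [of] using relq (RelE.orth21 (K := K))
private lemma hεl : e₁ K * ε K = ε K := by simpa [of] using relq (RelE.ep_l (K := K))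
private lemma hεr : ε K * e₁ K = ε K := by simpa [of] using relq (RelE.ep_r (K := K))
private lemma hεbl : e₂ K * εb K = εb K := by simpa [of] using relq (RelE.eb_l (K := K))
private lemma hεbr : εb K * e₂ K = εb K := by simpa [of] using relq (RelE.eb_r (K := K))
private lemma hαl : e₁ K * α K = α K := by simpa [of] using relq (RelE.al_l (K := K))
private lemma hαr : α K * e₂ K = α K := by simpa [of] using relq (RelE.al_r (K := K))
private lemma hαbl : e₂ K * αb K = αb K := by simpa [of] using relq (RelE.ab_l (K := K))
private lemma hαbr : αb K * e₁ K = αb K := by simpa [of] using relq (RelE.ab_r (K := K))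

private lemma hr1 : ε K * ε K = -(α K * αb K) := by
  have := relq (RelE.rel1 (K := K))
  simp only [map_add, map_mul, map_zero] at this
  rw [eq_neg_iff_add_eq_zero]
  simpa [of] using this

private lemma hr2 : εb K * εb K = -(αb K * α K) := by
  have := relq (RelE.rel2 (K := K))
  simp only [map_add, map_mul, map_zero] at this
  rw [eq_neg_iff_add_eq_zero]
  simpa [of] using this

/-- products (ending at vertex 1) * (starting at vertex 2) vanish -/
private lemma vanish12 {a b : PreprojE K} (ha : a * e₁ K = a) (hb : e₂ K * b = b) :
    a * b = 0 := by
  rw [← ha, ← hb, mul_assoc, ← mul_assoc (e₁ K), h12, zero_mul, mul_zero]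

private lemma vanish21 {a b : PreprojE K} (ha : a * e₂ K = a) (hb : e₁ K * b = b) :
    a * b = 0 := by
  rw [← ha, ← hb, mul_assoc, ← mul_assoc (e₂ K), h21, zero_mul, mul_zero]

-- zero products among generators
private lemma zεεb : ε K * εb K = 0 := vanish12 hεr hεbl
private lemma zεαb : ε K * αb K = 0 := vanish12 hεr hαbl
private lemma zεe₂ : ε K * e₂ K = 0 := vanish12 hεr h22
private lemma zαbεb : αb K * εb K = 0 := vanish12 hαbr hεbl
private lemma zαbαb : αb K * αb K = 0 := vanish12 hαbr hαbl
private lemma zαbe₂ : αb K * e₂ K = 0 := vanish12 hαbr h22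
private lemma ze₁εb : e₁ K * εb K = 0 := vanish12 h11 hεbl
private lemma ze₁αb : e₁ K * αb K = 0 := vanish12 h11 hαbl
private lemma zεbε : εb K * ε K = 0 := vanish21 hεbr hεl
private lemma zεbα : εb K * α K = 0 := vanish21 hεbr hαl
private lemma zεbe₁ : εb K * e₁ K = 0 := vanish21 hεbr h11
private lemma zαε : α K * ε K = 0 := vanish21 hαr hεl
private lemma zαα : α K * α K = 0 := vanish21 hαr hαl
private lemma zαe₁ : α K * e₁ K = 0 := vanish21 hαr h11
private lemma ze₂ε : e₂ K * ε K = 0 := vanish21 h22 hεl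
private lemma ze₂α : e₂ K * α K = 0 := vanish21 h22 hαl

-- instance-friendly ring lemmas (RingQuot instance mismatch workarounds)
private lemma nmul (a b : PreprojE K) : -a * b = -(a * b) := neg_mul a b
private lemma mneg (a b : PreprojE K) : a * -b = -(a * b) := mul_neg a b

-- primed (right-associated) versions
private lemma zp {a b : PreprojE K} (h : a * b = 0) (t : PreprojE K) : a * (b * t) = 0 := by
  rw [← mul_assoc, h, zero_mul]
private lemma abp {a b c : PreprojE K} (h : a * b = c) (t : PreprojE K) : a * (b * t) = c * t := by
  rw [← mul_assoc, h]

private lemma zεεb' (t : PreprojE K) : ε K * (εb K * t) = 0 := zp zεεb t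
private lemma zεαb' (t : PreprojE K) : ε K * (αb K * t) = 0 := zp zεαb t
private lemma zεe₂' (t : PreprojE K) : ε K * (e₂ K * t) = 0 := zp zεe₂ t
private lemma zαbεb' (t : PreprojE K) : αb K * (εb K * t) = 0 := zp zαbεb t
private lemma zαbαb' (t : PreprojE K) : αb K * (αb K * t) = 0 := zp zαbαb t
private lemma zαbe₂' (t : PreprojE K) : αb K * (e₂ K * t) = 0 := zp zαbe₂ t
private lemma ze₁εb' (t : PreprojE K) : e₁ K * (εb K * t) = 0 := zp ze₁εb t
private lemma ze₁αb' (t : PreprojE K) : e₁ K * (αb K * t) = 0 := zp ze₁αb t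
private lemma zεbε' (t : PreprojE K) : εb K * (ε K * t) = 0 := zp zεbε t
private lemma zεbα' (t : PreprojE K) : εb K * (α K * t) = 0 := zp zεbα t
private lemma zεbe₁' (t : PreprojE K) : εb K * (e₁ K * t) = 0 := zp zεbe₁ t
private lemma zαε' (t : PreprojE K) : α K * (ε K * t) = 0 := zp zαε t
private lemma zαα' (t : PreprojE K) : α K * (α K * t) = 0 := zp zαα t
private lemma zαe₁' (t : PreprojE K) : α K * (e₁ K * t) = 0 := zp zαe₁ t
private lemma ze₂ε' (t : PreprojE K) : e₂ K * (ε K * t) = 0 := zp ze₂ε t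
private lemma ze₂α' (t : PreprojE K) : e₂ K * (α K * t) = 0 := zp ze₂α t
private lemma h12' (t : PreprojE K) : e₁ K * (e₂ K * t) = 0 := zp h12 t
private lemma h21' (t : PreprojE K) : e₂ K * (e₁ K * t) = 0 := zp h21 t
private lemma h11' (t : PreprojE K) : e₁ K * (e₁ K * t) = e₁ K * t := abp h11 t
private lemma h22' (t : PreprojE K) : e₂ K * (e₂ K * t) = e₂ K * t := abp h22 t
private lemma hεl' (t : PreprojE K) : e₁ K * (ε K * t) = ε K * t := abp hεl t
private lemma hεr' (t : PreprojE K) : ε K * (e₁ K * t) = ε K * t := abp hεr t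
private lemma hεbl' (t : PreprojE K) : e₂ K * (εb K * t) = εb K * t := abp hεbl t
private lemma hεbr' (t : PreprojE K) : εb K * (e₂ K * t) = εb K * t := abp hεbr t
private lemma hαl' (t : PreprojE K) : e₁ K * (α K * t) = α K * t := abp hαl t
private lemma hαr' (t : PreprojE K) : α K * (e₂ K * t) = α K * t := abp hαr t
private lemma hαbl' (t : PreprojE K) : e₂ K * (αb K * t) = αb K * t := abp hαbl t
private lemma hαbr' (t : PreprojE K) : αb K * (e₁ K * t) = αb K * t := abp hαbr t

-- reversed relation forms
private lemma hr1s : α K * αb K = -(ε K * ε K) := by rw [hr1, neg_neg]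
private lemma hr2s : αb K * α K = -(εb K * εb K) := by rw [hr2, neg_neg]
private lemma hr1' (t : PreprojE K) : ε K * (ε K * t) = -(α K * (αb K * t)) := by
  rw [← mul_assoc, hr1, nmul, mul_assoc]
private lemma hr2' (t : PreprojE K) : εb K * (εb K * t) = -(αb K * (α K * t)) := by
  rw [← mul_assoc, hr2, nmul, mul_assoc]
private lemma hr1s' (t : PreprojE K) : α K * (αb K * t) = -(ε K * (ε K * t)) := by
  rw [← mul_assoc, hr1s, nmul, mul_assoc]
private lemma hr2s' (t : PreprojE K) : αb K * (α K * t) = -(εb K * (εb K * t)) := by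
  rw [← mul_assoc, hr2s, nmul, mul_assoc]

-- key identities
private lemma keyx1 : ε K * (ε K * α K) = α K * (εb K * εb K) := by
  rw [hr1' (α K), hr2]; simp only [mneg, neg_neg]
private lemma keyx2 : εb K * (εb K * αb K) = αb K * (ε K * ε K) := by
  rw [hr2' (αb K), hr1]; simp only [mneg, neg_neg]
private lemma keyz1 : α K * (εb K * (αb K * (α K * αb K))) = α K * (αb K * (α K * (εb K * αb K))) := by
  rw [hr2s' (αb K), hr2s' (εb K * αb K)]; simp only [mneg, neg_neg]
private lemma keyz2 : ε K * (α K * (εb K * (αb K * α K))) = α K * (αb K * (ε K * (α K * εb K))) := by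
  rw [hr1s' (ε K * (α K * εb K)), hr1' (α K * εb K), hr2s' (εb K), hr2s]
  simp only [mneg, neg_neg]
private lemma keyz3 : αb K * (ε K * (α K * (αb K * α K))) = αb K * (α K * (αb K * (ε K * α K))) := by
  rw [hr1s' (α K), hr1s' (ε K * α K)]; simp only [mneg, neg_neg]
private lemma keyz4 : εb K * (αb K * (ε K * (α K * αb K))) = αb K * (α K * (εb K * (αb K * ε K))) := by
  rw [hr2s' (εb K * (αb K * ε K)), hr2' (αb K * ε K), hr1s' (ε K), hr1s]
  simp only [mneg, neg_neg]

private lemma x_comm (g : Gen) : x K * of K g = of K g * x K := by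
  cases g <;>
  · show x K * _ = _ * x K
    rw [x, pow_two, pow_two]
    simp only [mul_add, add_mul, mul_assoc, mul_zero, zero_mul, add_zero, zero_add, nmul, mneg, neg_neg, zεεb, zεαb, zεe₂, zαbεb, zαbαb, zαbe₂, ze₁εb, ze₁αb, zεbε, zεbα, zεbe₁, zαε, zαα, zαe₁, ze₂ε, ze₂α, h12, h21, zεεb', zεαb', zεe₂', zαbεb', zαbαb', zαbe₂', ze₁εb', ze₁αb', zεbε', zεbα', zεbe₁', zαε', zαα', zαe₁', ze₂ε', ze₂α', h12', h21', h11, h22, hεl, hεr, hεbl, hεbr, hαl, hαr, hαbl, hαbr, h11', h22', hεl', hεr', hεbl', hεbr', hαl', hαr', hαbl', hαbr', keyx1, keyx2]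
private lemma z_comm (g : Gen) : z K * of K g = of K g * z K := by
  cases g <;>
  · show z K * _ = _ * z K
    rw [z]
    simp only [mul_add, add_mul, mul_assoc, mul_zero, zero_mul, add_zero, zero_add, nmul, mneg, neg_neg, zεεb, zεαb, zεe₂, zαbεb, zαbαb, zαbe₂, ze₁εb, ze₁αb, zεbε, zεbα, zεbe₁, zαε, zαα, zαe₁, ze₂ε, ze₂α, h12, h21, zεεb', zεαb', zεe₂', zαbεb', zαbαb', zαbe₂', ze₁εb', ze₁αb', zεbε', zεbα', zεbe₁', zαε', zαα', zαe₁', ze₂ε', ze₂α', h12', h21', h11, h22, hεl, hεr, hεbl, hεbr, hαl, hαr, hαbl, hαbr, h11', h22', hεl', hεr', hεbl', hεbr', hαl', hαr', hαbl', hαbr', hr1, hr2, hr1', hr2', keyz1, keyz2, keyz3, keyz4]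
    try simp only [add_comm]

private lemma central_of_comm (c : PreprojE K) (h : ∀ g, c * of K g = of K g * c) :
    ∀ y : PreprojE K, c * y = y * c := by
  intro y
  obtain ⟨a, rfl⟩ := RingQuot.mkAlgHom_surjective K (RelE K) y
  induction a using FreeAlgebra.induction with
  | grade0 r =>
      rw [AlgHom.commutes]
      exact (Algebra.commutes r c).symm
  | grade1 g => exact h g
  | mul a b ha hb => rw [map_mul, ← mul_assoc, ha, mul_assoc, hb, mul_assoc]
  | add a b ha hb => rw [map_add, mul_add, add_mul, ha, hb]

end PreprojE

open PreprojE in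
/-- `x = ε²+ε̄²` and `z = εαε̄ᾱ + αε̄ᾱε + ε̄ᾱεα + ᾱεαε̄` are central in `E`. -/
theorem x_z_central (K : Type) [Field K] [IsAlgClosed K] :
    (∀ y : PreprojE K, x K * y = y * x K) ∧ (∀ y : PreprojE K, z K * y = y * z K) :=
  ⟨PreprojE.central_of_comm _ (PreprojE.x_comm), PreprojE.central_of_comm _ (PreprojE.z_comm)⟩
end

section
/- For every element h of the set S = {e₁, e₂, ε, α, ε̄, ᾱ, εα, ε̄ᾱ, αε̄, ᾱε, εαε̄, ε̄ᾱε, ᾱεα, αε̄ᾱ, εαε̄ᾱ, ε̄ᾱεα} and every arrow γ ∈ {ε, ε̄, α, ᾱ} of Q, the product hγ in E can be written as Σ_{s∈S} z_s s with each coefficient z_s lying in the K-subalgebra of E generated by the central elements x and z. -/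
open FreeAlgebra

variable (K : Type) [Field K]

namespace Aux
open PreprojE

lemma rl {a b : FreeAlgebra K Gen} (h : RelE K a b) :
    RingQuot.mkAlgHom K (RelE K) a = RingQuot.mkAlgHom K (RelE K) b :=
  RingQuot.mkAlgHom_rel K h

lemma i1 : e₁ K * e₁ K = e₁ K := by
  simpa [PreprojE.of, map_mul] using rl K (RelE.idem1 (K := K))
lemma i2 : e₂ K * e₂ K = e₂ K := by
  simpa [PreprojE.of, map_mul] using rl K (RelE.idem2 (K := K))
lemma o12 : e₁ K * e₂ K = 0 := by
  simpa [PreprojE.of, map_mul] using rl K (RelE.orth12 (K := K))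
lemma o21 : e₂ K * e₁ K = 0 := by
  simpa [PreprojE.of, map_mul] using rl K (RelE.orth21 (K := K))
lemma lep : e₁ K * ε K = ε K := by
  simpa [PreprojE.of, map_mul] using rl K (RelE.ep_l (K := K))
lemma rep : ε K * e₁ K = ε K := by
  simpa [PreprojE.of, map_mul] using rl K (RelE.ep_r (K := K))
lemma leb : e₂ K * εb K = εb K := by
  simpa [PreprojE.of, map_mul] using rl K (RelE.eb_l (K := K))
lemma reb : εb K * e₂ K = εb K := by
  simpa [PreprojE.of, map_mul] using rl K (RelE.eb_r (K := K))
lemma lal : e₁ K * α K = α K := by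
  simpa [PreprojE.of, map_mul] using rl K (RelE.al_l (K := K))
lemma ral : α K * e₂ K = α K := by
  simpa [PreprojE.of, map_mul] using rl K (RelE.al_r (K := K))
lemma lab : e₂ K * αb K = αb K := by
  simpa [PreprojE.of, map_mul] using rl K (RelE.ab_l (K := K))
lemma rab : αb K * e₁ K = αb K := by
  simpa [PreprojE.of, map_mul] using rl K (RelE.ab_r (K := K))
lemma r1 : ε K * ε K + α K * αb K = 0 := by
  simpa [PreprojE.of, map_mul, map_add] using rl K (RelE.rel1 (K := K))
lemma r2 : εb K * εb K + αb K * α K = 0 := by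
  simpa [PreprojE.of, map_mul, map_add] using rl K (RelE.rel2 (K := K))

-- neg helpers (avoid instance mismatch in `rw`)
lemma mneg (a b : PreprojE K) : a * -b = -(a * b) := mul_neg a b
lemma negm (a b : PreprojE K) : -a * b = -(a * b) := neg_mul a b
lemma nneg (a : PreprojE K) : -(-a) = a := neg_neg a

-- zero lemmas with idempotents
lemma z_ep_e2 : ε K * e₂ K = 0 := by rw [← rep, mul_assoc, o12, mul_zero]
lemma z_eb_e1 : εb K * e₁ K = 0 := by rw [← reb, mul_assoc, o21, mul_zero]
lemma z_al_e1 : α K * e₁ K = 0 := by rw [← ral, mul_assoc, o21, mul_zero]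
lemma z_ab_e2 : αb K * e₂ K = 0 := by rw [← rab, mul_assoc, o12, mul_zero]
lemma z_e1_eb : e₁ K * εb K = 0 := by rw [← leb, ← mul_assoc, o12, zero_mul]
lemma z_e1_ab : e₁ K * αb K = 0 := by rw [← lab, ← mul_assoc, o12, zero_mul]
lemma z_e2_ep : e₂ K * ε K = 0 := by rw [← lep, ← mul_assoc, o21, zero_mul]
lemma z_e2_al : e₂ K * α K = 0 := by rw [← lal, ← mul_assoc, o21, zero_mul]

-- zero lemmas among arrows
lemma z_ep_eb : ε K * εb K = 0 := by rw [← leb, ← mul_assoc, z_ep_e2, zero_mul]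
lemma z_ep_ab : ε K * αb K = 0 := by rw [← lab, ← mul_assoc, z_ep_e2, zero_mul]
lemma z_eb_ep : εb K * ε K = 0 := by rw [← lep, ← mul_assoc, z_eb_e1, zero_mul]
lemma z_eb_al : εb K * α K = 0 := by rw [← lal, ← mul_assoc, z_eb_e1, zero_mul]
lemma z_al_ep : α K * ε K = 0 := by rw [← lep, ← mul_assoc, z_al_e1, zero_mul]
lemma z_al_al : α K * α K = 0 := by
  nth_rewrite 2 [← lal]
  rw [← mul_assoc, z_al_e1, zero_mul]
lemma z_ab_eb : αb K * εb K = 0 := by rw [← leb, ← mul_assoc, z_ab_e2, zero_mul]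
lemma z_ab_ab : αb K * αb K = 0 := by
  nth_rewrite 2 [← lab]
  rw [← mul_assoc, z_ab_e2, zero_mul]

-- negation forms of the preprojective relations
lemma aab : α K * αb K = -(ε K * ε K) := eq_neg_of_add_eq_zero_right (r1 K)
lemma epep : ε K * ε K = -(α K * αb K) := eq_neg_of_add_eq_zero_left (r1 K)
lemma abal : αb K * α K = -(εb K * εb K) := eq_neg_of_add_eq_zero_right (r2 K)
lemma ebeb : εb K * εb K = -(αb K * α K) := eq_neg_of_add_eq_zero_left (r2 K)

-- commutation
lemma c1 : α K * (εb K * εb K) = ε K * (ε K * α K) := by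
  rw [ebeb, mneg, ← mul_assoc, aab, negm, nneg, mul_assoc]
lemma c2 : αb K * (ε K * ε K) = εb K * (εb K * αb K) := by
  rw [epep, mneg, ← mul_assoc, abal, negm, nneg, mul_assoc]
lemma c1g (r : PreprojE K) : α K * (εb K * (εb K * r)) = ε K * (ε K * (α K * r)) := by
  rw [← mul_assoc (εb K), ← mul_assoc (α K), c1, mul_assoc, mul_assoc]
lemma c2g (r : PreprojE K) : αb K * (ε K * (ε K * r)) = εb K * (εb K * (αb K * r)) := by
  rw [← mul_assoc (ε K), ← mul_assoc (αb K), c2, mul_assoc, mul_assoc]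

-- x lemmas
lemma px : x K = ε K * ε K + εb K * εb K := by rw [x, pow_two, pow_two]
lemma X1 : x K * e₁ K = ε K * ε K := by
  rw [px, add_mul, mul_assoc, rep, mul_assoc, z_eb_e1, mul_zero, add_zero]
lemma X2 : x K * e₂ K = εb K * εb K := by
  rw [px, add_mul, mul_assoc, z_ep_e2, mul_zero, zero_add, mul_assoc, reb]
lemma X3 : x K * ε K = ε K * (ε K * ε K) := by
  rw [px, add_mul, mul_assoc, mul_assoc, z_eb_ep, mul_zero, add_zero]
lemma X4 : x K * εb K = εb K * (εb K * εb K) := by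
  rw [px, add_mul, mul_assoc, z_ep_eb, mul_zero, zero_add, mul_assoc]
lemma X5 : x K * α K = ε K * (ε K * α K) := by
  rw [px, add_mul, mul_assoc, mul_assoc, z_eb_al, mul_zero, add_zero]
lemma X6 : x K * αb K = εb K * (εb K * αb K) := by
  rw [px, add_mul, mul_assoc, z_ep_ab, mul_zero, zero_add, mul_assoc]
lemma x3g (r : PreprojE K) : x K * (ε K * r) = ε K * (ε K * (ε K * r)) := by
  rw [← mul_assoc, X3, mul_assoc, mul_assoc]
lemma x4g (r : PreprojE K) : x K * (εb K * r) = εb K * (εb K * (εb K * r)) := by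
  rw [← mul_assoc, X4, mul_assoc, mul_assoc]
lemma x5g (r : PreprojE K) : x K * (α K * r) = ε K * (ε K * (α K * r)) := by
  rw [← mul_assoc, X5, mul_assoc, mul_assoc]
lemma x6g (r : PreprojE K) : x K * (αb K * r) = εb K * (εb K * (αb K * r)) := by
  rw [← mul_assoc, X6, mul_assoc, mul_assoc]

end Aux
namespace Aux
open PreprojE

lemma n1 (a : PreprojE K) : (-1 : PreprojE K) * a = -a := by rw [negm, one_mul]

lemma E1 : ε K * ε K = x K * e₁ K := (X1 K).symm
lemma E2 : εb K * εb K = x K * e₂ K := (X2 K).symm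
lemma E3 : α K * αb K = -(x K) * e₁ K := by rw [negm, X1]; exact aab K
lemma E4 : αb K * α K = -(x K) * e₂ K := by rw [negm, X2]; exact abal K
lemma E5 : ε K * α K * αb K = -(x K) * ε K := by
  rw [negm]; simp only [mul_assoc]; rw [aab]; simp only [mneg]; rw [X3]
lemma E6 : εb K * αb K * α K = -(x K) * εb K := by
  rw [negm]; simp only [mul_assoc]; rw [abal]; simp only [mneg]; rw [X4]
lemma E7 : α K * εb K * εb K = x K * α K := by
  simp only [mul_assoc]; rw [c1, X5]
lemma E8 : αb K * ε K * ε K = x K * αb K := by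
  simp only [mul_assoc]; rw [c2, X6]
lemma E9 : ε K * α K * εb K * εb K = x K * (ε K * α K) := by
  simp only [mul_assoc]; rw [c1, x3g]
lemma E10 : εb K * αb K * ε K * ε K = x K * (εb K * αb K) := by
  simp only [mul_assoc]; rw [c2, x4g]
lemma E11 : α K * εb K * αb K * α K = -(x K) * (α K * εb K) := by
  rw [negm]; simp only [mul_assoc]; rw [abal]; simp only [mneg]; rw [c1g, x5g]
lemma E12 : αb K * ε K * α K * αb K = -(x K) * (αb K * ε K) := by
  rw [negm]; simp only [mul_assoc]; rw [aab]; simp only [mneg]; rw [c2g, x6g]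
lemma E13 : ε K * α K * εb K * αb K * α K = -(x K) * (ε K * α K * εb K) := by
  rw [negm]; simp only [mul_assoc]; rw [abal]; simp only [mneg]; rw [c1g, x3g]
lemma E14 : εb K * αb K * ε K * α K * αb K = -(x K) * (εb K * αb K * ε K) := by
  rw [negm]; simp only [mul_assoc]; rw [aab]; simp only [mneg]; rw [c2g, x4g]

lemma Z1 : z K * e₁ K = ε K * α K * εb K * αb K + α K * εb K * αb K * ε K := by
  simp only [z, add_mul, mul_assoc, rab, rep, z_al_e1, z_eb_e1, mul_zero, add_zero]
lemma Z2 : z K * e₂ K = εb K * αb K * ε K * α K + αb K * ε K * α K * εb K := by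
  simp only [z, add_mul, mul_assoc, z_ab_e2, z_ep_e2, ral, reb, mul_zero, zero_add, add_zero]
lemma E16 : α K * εb K * αb K * ε K
    = z K * e₁ K + (-1 : PreprojE K) * (ε K * α K * εb K * αb K) := by
  rw [n1, ← sub_eq_add_neg]; exact eq_sub_of_add_eq' (Z1 K).symm
lemma E17 : αb K * ε K * α K * εb K
    = z K * e₂ K + (-1 : PreprojE K) * (εb K * αb K * ε K * α K) := by
  rw [n1, ← sub_eq_add_neg]; exact eq_sub_of_add_eq' (Z2 K).symm
lemma E18 : ε K * α K * εb K * αb K * ε K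
    = z K * ε K + -(x K) * (α K * εb K * αb K) := by
  rw [negm, ← sub_eq_add_neg, eq_sub_iff_add_eq]
  simp only [mul_assoc]
  rw [x5g]
  simp only [z, add_mul, mul_assoc, z_al_ep, z_eb_ep, mul_zero, add_zero]
  rw [c2, c1g]
lemma E19 : εb K * αb K * ε K * α K * εb K
    = z K * εb K + -(x K) * (αb K * ε K * α K) := by
  rw [negm, ← sub_eq_add_neg, eq_sub_iff_add_eq]
  simp only [mul_assoc]
  rw [x6g]
  simp only [z, add_mul, mul_assoc, z_ab_eb, z_ep_eb, mul_zero, add_zero, zero_add]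
  rw [c1, c2g]

end Aux
namespace Aux
open PreprojE

lemma memS {v : PreprojE K} (hv : v ∈ S K) :
    v ∈ Submodule.span (Algebra.adjoin K ({x K, z K} : Set (PreprojE K))) (S K) :=
  Submodule.subset_span hv

lemma mem_smul {c v : PreprojE K}
    (hc : c ∈ Algebra.adjoin K ({x K, z K} : Set (PreprojE K))) (hv : v ∈ S K) :
    c * v ∈ Submodule.span (Algebra.adjoin K ({x K, z K} : Set (PreprojE K))) (S K) :=
  Submodule.smul_mem
    (Submodule.span (Algebra.adjoin K ({x K, z K} : Set (PreprojE K))) (S K))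
    (⟨c, hc⟩ : Algebra.adjoin K ({x K, z K} : Set (PreprojE K)))
    (Submodule.subset_span hv)

lemma mS1 : e₁ K ∈ S K := by unfold S; exact Set.mem_insert _ _
lemma mS2 : e₂ K ∈ S K := by unfold S
                             exact Set.mem_insert_of_mem _ (Set.mem_insert _ _)
lemma mS3 : ε K ∈ S K := by unfold S
                            exact Set.mem_insert_of_mem _ (Set.mem_insert_of_mem _ (Set.mem_insert _ _))
lemma mS4 : α K ∈ S K := by unfold S
                            exact Set.mem_insert_of_mem _ (Set.mem_insert_of_mem _ (Set.mem_insert_of_mem _ (Set.mem_insert _ _)))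
lemma mS5 : εb K ∈ S K := by unfold S
                             exact Set.mem_insert_of_mem _ (Set.mem_insert_of_mem _ (Set.mem_insert_of_mem _ (Set.mem_insert_of_mem _ (Set.mem_insert _ _))))
lemma mS6 : αb K ∈ S K := by unfold S
                             exact Set.mem_insert_of_mem _ (Set.mem_insert_of_mem _ (Set.mem_insert_of_mem _ (Set.mem_insert_of_mem _ (Set.mem_insert_of_mem _ (Set.mem_insert _ _)))))
lemma mS7 : ε K * α K ∈ S K := by unfold S
                                  exact Set.mem_insert_of_mem _ (Set.mem_insert_of_mem _ (Set.mem_insert_of_mem _ (Set.mem_insert_of_mem _ (Set.mem_insert_of_mem _ (Set.mem_insert_of_mem _ (Set.mem_insert _ _))))))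
lemma mS8 : εb K * αb K ∈ S K := by unfold S
                                    exact Set.mem_insert_of_mem _ (Set.mem_insert_of_mem _ (Set.mem_insert_of_mem _ (Set.mem_insert_of_mem _ (Set.mem_insert_of_mem _ (Set.mem_insert_of_mem _ (Set.mem_insert_of_mem _ (Set.mem_insert _ _)))))))
lemma mS9 : α K * εb K ∈ S K := by unfold S
                                   exact Set.mem_insert_of_mem _ (Set.mem_insert_of_mem _ (Set.mem_insert_of_mem _ (Set.mem_insert_of_mem _ (Set.mem_insert_of_mem _ (Set.mem_insert_of_mem _ (Set.mem_insert_of_mem _ (Set.mem_insert_of_mem _ (Set.mem_insert _ _))))))))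
lemma mS10 : αb K * ε K ∈ S K := by unfold S
                                    exact Set.mem_insert_of_mem _ (Set.mem_insert_of_mem _ (Set.mem_insert_of_mem _ (Set.mem_insert_of_mem _ (Set.mem_insert_of_mem _ (Set.mem_insert_of_mem _ (Set.mem_insert_of_mem _ (Set.mem_insert_of_mem _ (Set.mem_insert_of_mem _ (Set.mem_insert _ _)))))))))
lemma mS11 : ε K * α K * εb K ∈ S K := by unfold S
                                          exact Set.mem_insert_of_mem _ (Set.mem_insert_of_mem _ (Set.mem_insert_of_mem _ (Set.mem_insert_of_mem _ (Set.mem_insert_of_mem _ (Set.mem_insert_of_mem _ (Set.mem_insert_of_mem _ (Set.mem_insert_of_mem _ (Set.mem_insert_of_mem _ (Set.mem_insert_of_mem _ (Set.mem_insert _ _))))))))))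
lemma mS12 : εb K * αb K * ε K ∈ S K := by unfold S
                                           exact Set.mem_insert_of_mem _ (Set.mem_insert_of_mem _ (Set.mem_insert_of_mem _ (Set.mem_insert_of_mem _ (Set.mem_insert_of_mem _ (Set.mem_insert_of_mem _ (Set.mem_insert_of_mem _ (Set.mem_insert_of_mem _ (Set.mem_insert_of_mem _ (Set.mem_insert_of_mem _ (Set.mem_insert_of_mem _ (Set.mem_insert _ _)))))))))))
lemma mS13 : αb K * ε K * α K ∈ S K := by unfold S
                                          exact Set.mem_insert_of_mem _ (Set.mem_insert_of_mem _ (Set.mem_insert_of_mem _ (Set.mem_insert_of_mem _ (Set.mem_insert_of_mem _ (Set.mem_insert_of_mem _ (Set.mem_insert_of_mem _ (Set.mem_insert_of_mem _ (Set.mem_insert_of_mem _ (Set.mem_insert_of_mem _ (Set.mem_insert_of_mem _ (Set.mem_insert_of_mem _ (Set.mem_insert _ _))))))))))))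
lemma mS14 : α K * εb K * αb K ∈ S K := by unfold S
                                           exact Set.mem_insert_of_mem _ (Set.mem_insert_of_mem _ (Set.mem_insert_of_mem _ (Set.mem_insert_of_mem _ (Set.mem_insert_of_mem _ (Set.mem_insert_of_mem _ (Set.mem_insert_of_mem _ (Set.mem_insert_of_mem _ (Set.mem_insert_of_mem _ (Set.mem_insert_of_mem _ (Set.mem_insert_of_mem _ (Set.mem_insert_of_mem _ (Set.mem_insert_of_mem _ (Set.mem_insert _ _)))))))))))))
lemma mS15 : ε K * α K * εb K * αb K ∈ S K := by unfold S
                                                 exact Set.mem_insert_of_mem _ (Set.mem_insert_of_mem _ (Set.mem_insert_of_mem _ (Set.mem_insert_of_mem _ (Set.mem_insert_of_mem _ (Set.mem_insert_of_mem _ (Set.mem_insert_of_mem _ (Set.mem_insert_of_mem _ (Set.mem_insert_of_mem _ (Set.mem_insert_of_mem _ (Set.mem_insert_of_mem _ (Set.mem_insert_of_mem _ (Set.mem_insert_of_mem _ (Set.mem_insert_of_mem _ (Set.mem_insert _ _))))))))))))))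
lemma mS16 : εb K * αb K * ε K * α K ∈ S K := by unfold S
                                                 exact Set.mem_insert_of_mem _ (Set.mem_insert_of_mem _ (Set.mem_insert_of_mem _ (Set.mem_insert_of_mem _ (Set.mem_insert_of_mem _ (Set.mem_insert_of_mem _ (Set.mem_insert_of_mem _ (Set.mem_insert_of_mem _ (Set.mem_insert_of_mem _ (Set.mem_insert_of_mem _ (Set.mem_insert_of_mem _ (Set.mem_insert_of_mem _ (Set.mem_insert_of_mem _ (Set.mem_insert_of_mem _ (Set.mem_insert_of_mem _ rfl))))))))))))))

end Aux

open PreprojE in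
/-- For every `h ∈ S` and every arrow `γ` of `Q`, the product `hγ` lies in the span of `S`
over the subalgebra of `E` generated by the central elements `x` and `z`. -/
theorem S_mul_arrow_in_span (K : Type) [Field K] [IsAlgClosed K] :
    ∀ h ∈ S K, ∀ γ ∈ ({ε K, εb K, α K, αb K} : Set (PreprojE K)),
      h * γ ∈ Submodule.span (Algebra.adjoin K ({x K, z K} : Set (PreprojE K))) (S K) := by
  intro h hh γ hγ
  have hxR : x K ∈ Algebra.adjoin K ({x K, z K} : Set (PreprojE K)) :=
    Algebra.subset_adjoin (Set.mem_insert _ _)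
  have hzR : z K ∈ Algebra.adjoin K ({x K, z K} : Set (PreprojE K)) :=
    Algebra.subset_adjoin (Set.mem_insert_of_mem _ rfl)
  have hnx : -(x K) ∈ Algebra.adjoin K ({x K, z K} : Set (PreprojE K)) :=
    Subalgebra.neg_mem _ hxR
  have hn1 : (-1 : PreprojE K) ∈ Algebra.adjoin K ({x K, z K} : Set (PreprojE K)) :=
    Subalgebra.neg_mem _ (one_mem _)
  simp only [S, Set.mem_insert_iff, Set.mem_singleton_iff] at hh hγ
  rcases hh with rfl|rfl|rfl|rfl|rfl|rfl|rfl|rfl|rfl|rfl|rfl|rfl|rfl|rfl|rfl|rfl <;>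
    rcases hγ with rfl|rfl|rfl|rfl <;>
    first
      | (simp only [mul_assoc, Aux.z_e1_eb, Aux.z_e1_ab, Aux.z_e2_ep, Aux.z_e2_al,
            Aux.z_ep_eb, Aux.z_ep_ab, Aux.z_eb_ep, Aux.z_eb_al, Aux.z_al_ep, Aux.z_al_al,
            Aux.z_ab_eb, Aux.z_ab_ab, mul_zero]
         exact Submodule.zero_mem _)
      | skip
  · rw [Aux.lep]; exact Aux.memS K (Aux.mS3 K)
  · rw [Aux.lal]; exact Aux.memS K (Aux.mS4 K)
  · rw [Aux.leb]; exact Aux.memS K (Aux.mS5 K)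
  · rw [Aux.lab]; exact Aux.memS K (Aux.mS6 K)
  · rw [Aux.E1]; exact Aux.mem_smul K hxR (Aux.mS1 K)
  · exact Aux.memS K (Aux.mS7 K)
  · exact Aux.memS K (Aux.mS9 K)
  · rw [Aux.E3]; exact Aux.mem_smul K hnx (Aux.mS1 K)
  · rw [Aux.E2]; exact Aux.mem_smul K hxR (Aux.mS2 K)
  · exact Aux.memS K (Aux.mS8 K)
  · exact Aux.memS K (Aux.mS10 K)
  · rw [Aux.E4]; exact Aux.mem_smul K hnx (Aux.mS2 K)
  · exact Aux.memS K (Aux.mS11 K)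
  · rw [Aux.E5]; exact Aux.mem_smul K hnx (Aux.mS3 K)
  · exact Aux.memS K (Aux.mS12 K)
  · rw [Aux.E6]; exact Aux.mem_smul K hnx (Aux.mS5 K)
  · rw [Aux.E7]; exact Aux.mem_smul K hxR (Aux.mS4 K)
  · exact Aux.memS K (Aux.mS14 K)
  · rw [Aux.E8]; exact Aux.mem_smul K hxR (Aux.mS6 K)
  · exact Aux.memS K (Aux.mS13 K)
  · rw [Aux.E9]; exact Aux.mem_smul K hxR (Aux.mS7 K)
  · exact Aux.memS K (Aux.mS15 K)
  · rw [Aux.E10]; exact Aux.mem_smul K hxR (Aux.mS8 K)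
  · exact Aux.memS K (Aux.mS16 K)
  · rw [Aux.E17]
    exact Submodule.add_mem _ (Aux.mem_smul K hzR (Aux.mS2 K)) (Aux.mem_smul K hn1 (Aux.mS16 K))
  · rw [Aux.E12]; exact Aux.mem_smul K hnx (Aux.mS10 K)
  · rw [Aux.E16]
    exact Submodule.add_mem _ (Aux.mem_smul K hzR (Aux.mS1 K)) (Aux.mem_smul K hn1 (Aux.mS15 K))
  · rw [Aux.E11]; exact Aux.mem_smul K hnx (Aux.mS9 K)
  · rw [Aux.E18]
    exact Submodule.add_mem _ (Aux.mem_smul K hzR (Aux.mS3 K)) (Aux.mem_smul K hnx (Aux.mS14 K))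
  · rw [Aux.E13]; exact Aux.mem_smul K hnx (Aux.mS11 K)
  · rw [Aux.E19]
    exact Submodule.add_mem _ (Aux.mem_smul K hzR (Aux.mS5 K)) (Aux.mem_smul K hnx (Aux.mS13 K))
  · rw [Aux.E14]; exact Aux.mem_smul K hnx (Aux.mS12 K)
end

section
/- The central elements x and z of E are algebraically independent over K: the K-algebra homomorphism from the polynomial ring K[X,Y] to E sending X to x and Y to z is injective, so the K-subalgebra of E generated by x and z is isomorphic to a polynomial ring in two variables over K. -/
open FreeAlgebra

variable (K : Type) [Field K]

section Fin4Helpers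
variable {α : Type*} [CommRing α]

set_option maxHeartbeats 1000000 in
theorem mul_fin_four (a₁₁ a₁₂ a₁₃ a₁₄ a₂₁ a₂₂ a₂₃ a₂₄ a₃₁ a₃₂ a₃₃ a₃₄ a₄₁ a₄₂ a₄₃ a₄₄
    b₁₁ b₁₂ b₁₃ b₁₄ b₂₁ b₂₂ b₂₃ b₂₄ b₃₁ b₃₂ b₃₃ b₃₄ b₄₁ b₄₂ b₄₃ b₄₄ : α) :
    !![a₁₁, a₁₂, a₁₃, a₁₄; a₂₁, a₂₂, a₂₃, a₂₄; a₃₁, a₃₂, a₃₃, a₃₄; a₄₁, a₄₂, a₄₃, a₄₄] *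
    !![b₁₁, b₁₂, b₁₃, b₁₄; b₂₁, b₂₂, b₂₃, b₂₄; b₃₁, b₃₂, b₃₃, b₃₄; b₄₁, b₄₂, b₄₃, b₄₄] =
    !![a₁₁*b₁₁ + a₁₂*b₂₁ + a₁₃*b₃₁ + a₁₄*b₄₁, a₁₁*b₁₂ + a₁₂*b₂₂ + a₁₃*b₃₂ + a₁₄*b₄₂,
       a₁₁*b₁₃ + a₁₂*b₂₃ + a₁₃*b₃₃ + a₁₄*b₄₃, a₁₁*b₁₄ + a₁₂*b₂₄ + a₁₃*b₃₄ + a₁₄*b₄₄;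
       a₂₁*b₁₁ + a₂₂*b₂₁ + a₂₃*b₃₁ + a₂₄*b₄₁, a₂₁*b₁₂ + a₂₂*b₂₂ + a₂₃*b₃₂ + a₂₄*b₄₂,
       a₂₁*b₁₃ + a₂₂*b₂₃ + a₂₃*b₃₃ + a₂₄*b₄₃, a₂₁*b₁₄ + a₂₂*b₂₄ + a₂₃*b₃₄ + a₂₄*b₄₄;
       a₃₁*b₁₁ + a₃₂*b₂₁ + a₃₃*b₃₁ + a₃₄*b₄₁, a₃₁*b₁₂ + a₃₂*b₂₂ + a₃₃*b₃₂ + a₃₄*b₄₂,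
       a₃₁*b₁₃ + a₃₂*b₂₃ + a₃₃*b₃₃ + a₃₄*b₄₃, a₃₁*b₁₄ + a₃₂*b₂₄ + a₃₃*b₃₄ + a₃₄*b₄₄;
       a₄₁*b₁₁ + a₄₂*b₂₁ + a₄₃*b₃₁ + a₄₄*b₄₁, a₄₁*b₁₂ + a₄₂*b₂₂ + a₄₃*b₃₂ + a₄₄*b₄₂,
       a₄₁*b₁₃ + a₄₂*b₂₃ + a₄₃*b₃₃ + a₄₄*b₄₃, a₄₁*b₁₄ + a₄₂*b₂₄ + a₄₃*b₃₄ + a₄₄*b₄₄] := by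
  ext i j
  fin_cases i <;> fin_cases j <;>
    simp [Matrix.mul_apply, Fin.sum_univ_succ, ← add_assoc]

theorem add_fin_four (a₁₁ a₁₂ a₁₃ a₁₄ a₂₁ a₂₂ a₂₃ a₂₄ a₃₁ a₃₂ a₃₃ a₃₄ a₄₁ a₄₂ a₄₃ a₄₄
    b₁₁ b₁₂ b₁₃ b₁₄ b₂₁ b₂₂ b₂₃ b₂₄ b₃₁ b₃₂ b₃₃ b₃₄ b₄₁ b₄₂ b₄₃ b₄₄ : α) :
    !![a₁₁, a₁₂, a₁₃, a₁₄; a₂₁, a₂₂, a₂₃, a₂₄; a₃₁, a₃₂, a₃₃, a₃₄; a₄₁, a₄₂, a₄₃, a₄₄] +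
    !![b₁₁, b₁₂, b₁₃, b₁₄; b₂₁, b₂₂, b₂₃, b₂₄; b₃₁, b₃₂, b₃₃, b₃₄; b₄₁, b₄₂, b₄₃, b₄₄] =
    !![a₁₁+b₁₁, a₁₂+b₁₂, a₁₃+b₁₃, a₁₄+b₁₄; a₂₁+b₂₁, a₂₂+b₂₂, a₂₃+b₂₃, a₂₄+b₂₄;
       a₃₁+b₃₁, a₃₂+b₃₂, a₃₃+b₃₃, a₃₄+b₃₄; a₄₁+b₄₁, a₄₂+b₄₂, a₄₃+b₄₃, a₄₄+b₄₄] := by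
  ext i j
  fin_cases i <;> fin_cases j <;> rfl

omit [CommRing α] in
theorem eq_fin_four {a₁₁ a₁₂ a₁₃ a₁₄ a₂₁ a₂₂ a₂₃ a₂₄ a₃₁ a₃₂ a₃₃ a₃₄ a₄₁ a₄₂ a₄₃ a₄₄
    b₁₁ b₁₂ b₁₃ b₁₄ b₂₁ b₂₂ b₂₃ b₂₄ b₃₁ b₃₂ b₃₃ b₃₄ b₄₁ b₄₂ b₄₃ b₄₄ : α}
    (h11 : a₁₁ = b₁₁) (h12 : a₁₂ = b₁₂) (h13 : a₁₃ = b₁₃) (h14 : a₁₄ = b₁₄)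
    (h21 : a₂₁ = b₂₁) (h22 : a₂₂ = b₂₂) (h23 : a₂₃ = b₂₃) (h24 : a₂₄ = b₂₄)
    (h31 : a₃₁ = b₃₁) (h32 : a₃₂ = b₃₂) (h33 : a₃₃ = b₃₃) (h34 : a₃₄ = b₃₄)
    (h41 : a₄₁ = b₄₁) (h42 : a₄₂ = b₄₂) (h43 : a₄₃ = b₄₃) (h44 : a₄₄ = b₄₄) :
    !![a₁₁, a₁₂, a₁₃, a₁₄; a₂₁, a₂₂, a₂₃, a₂₄; a₃₁, a₃₂, a₃₃, a₃₄; a₄₁, a₄₂, a₄₃, a₄₄] =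
    !![b₁₁, b₁₂, b₁₃, b₁₄; b₂₁, b₂₂, b₂₃, b₂₄; b₃₁, b₃₂, b₃₃, b₃₄; b₄₁, b₄₂, b₄₃, b₄₄] := by
  subst_vars; rfl

theorem zero_fin_four : (0 : Matrix (Fin 4) (Fin 4) α) = !![0,0,0,0; 0,0,0,0; 0,0,0,0; 0,0,0,0] := by
  ext i j; fin_cases i <;> fin_cases j <;> rfl

theorem one_fin_four : (1 : Matrix (Fin 4) (Fin 4) α) = !![1,0,0,0; 0,1,0,0; 0,0,1,0; 0,0,0,1] := by
  ext i j; fin_cases i <;> fin_cases j <;> simp [Matrix.one_apply, Matrix.vecHead, Matrix.vecTail]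

theorem algebraMap_fin_four {R : Type*} [CommRing R] [Algebra R α] (r : R) :
    algebraMap R (Matrix (Fin 4) (Fin 4) α) r =
      !![algebraMap R α r,0,0,0; 0,algebraMap R α r,0,0;
         0,0,algebraMap R α r,0; 0,0,0,algebraMap R α r] := by
  ext i j; fin_cases i <;> fin_cases j <;> simp [Matrix.algebraMap_matrix_apply, Matrix.vecHead, Matrix.vecTail]

end Fin4Helpers

namespace XZAux

open PreprojE MvPolynomial

section Rels

variable (K : Type) [Field K]

theorem req {u v : FreeAlgebra K Gen} (h : RelE K u v) :
    RingQuot.mkAlgHom K (RelE K) u = RingQuot.mkAlgHom K (RelE K) v :=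
  RingQuot.mkAlgHom_rel K h

theorem sum' : e₁ K + e₂ K = 1 := by
  have h := req K (RelE.sum (K := K)); rw [map_add, map_one] at h; exact h

theorem idem1' : e₁ K * e₁ K = e₁ K := by
  have h := req K (RelE.idem1 (K := K)); rw [map_mul] at h; exact h

theorem idem2' : e₂ K * e₂ K = e₂ K := by
  have h := req K (RelE.idem2 (K := K)); rw [map_mul] at h; exact h

theorem orth12' : e₁ K * e₂ K = 0 := by
  have h := req K (RelE.orth12 (K := K)); rw [map_mul, map_zero] at h; exact h

theorem orth21' : e₂ K * e₁ K = 0 := by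
  have h := req K (RelE.orth21 (K := K)); rw [map_mul, map_zero] at h; exact h

theorem ep_l' : e₁ K * ε K = ε K := by
  have h := req K (RelE.ep_l (K := K)); rw [map_mul] at h; exact h

theorem ep_r' : ε K * e₁ K = ε K := by
  have h := req K (RelE.ep_r (K := K)); rw [map_mul] at h; exact h

theorem eb_l' : e₂ K * εb K = εb K := by
  have h := req K (RelE.eb_l (K := K)); rw [map_mul] at h; exact h

theorem eb_r' : εb K * e₂ K = εb K := by
  have h := req K (RelE.eb_r (K := K)); rw [map_mul] at h; exact h

theorem al_l' : e₁ K * α K = α K := by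
  have h := req K (RelE.al_l (K := K)); rw [map_mul] at h; exact h

theorem al_r' : α K * e₂ K = α K := by
  have h := req K (RelE.al_r (K := K)); rw [map_mul] at h; exact h

theorem ab_l' : e₂ K * αb K = αb K := by
  have h := req K (RelE.ab_l (K := K)); rw [map_mul] at h; exact h

theorem ab_r' : αb K * e₁ K = αb K := by
  have h := req K (RelE.ab_r (K := K)); rw [map_mul] at h; exact h

theorem rel1_eq : ε K * ε K + α K * αb K = 0 := by
  have h := req K (RelE.rel1 (K := K)); rw [map_add, map_mul, map_mul, map_zero] at h; exact h

theorem rel2_eq : εb K * εb K + αb K * α K = 0 := by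
  have h := req K (RelE.rel2 (K := K)); rw [map_add, map_mul, map_mul, map_zero] at h; exact h

/-- cross-corner products vanish -/
theorem cross12 (u v : PreprojE K) (hu : u * e₁ K = u) (hv : e₂ K * v = v) : u * v = 0 := by
  calc u * v = (u * e₁ K) * (e₂ K * v) := by rw [hu, hv]
    _ = u * ((e₁ K * e₂ K) * v) := by rw [mul_assoc, ← mul_assoc (e₁ K)]
    _ = 0 := by rw [orth12', zero_mul, mul_zero]

theorem cross21 (u v : PreprojE K) (hu : u * e₂ K = u) (hv : e₁ K * v = v) : u * v = 0 := by
  calc u * v = (u * e₂ K) * (e₁ K * v) := by rw [hu, hv]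
    _ = u * ((e₂ K * e₁ K) * v) := by rw [mul_assoc, ← mul_assoc (e₂ K)]
    _ = 0 := by rw [orth21', zero_mul, mul_zero]

theorem ep_eb : ε K * εb K = 0 := cross12 K _ _ (ep_r' K) (eb_l' K)
theorem eb_ep : εb K * ε K = 0 := cross21 K _ _ (eb_r' K) (ep_l' K)
theorem eb_al : εb K * α K = 0 := cross21 K _ _ (eb_r' K) (al_l' K)
theorem al_ep : α K * ε K = 0 := cross21 K _ _ (al_r' K) (ep_l' K)
theorem ep_ab : ε K * αb K = 0 := cross12 K _ _ (ep_r' K) (ab_l' K)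
theorem ab_eb : αb K * εb K = 0 := cross12 K _ _ (ab_r' K) (eb_l' K)
theorem eb_e1 : εb K * e₁ K = 0 := cross21 K _ _ (eb_r' K) (idem1' K)
theorem e1_eb : e₁ K * εb K = 0 := cross12 K _ _ (idem1' K) (eb_l' K)
theorem ep_e2 : ε K * e₂ K = 0 := cross12 K _ _ (ep_r' K) (idem2' K)
theorem e2_ep : e₂ K * ε K = 0 := cross21 K _ _ (idem2' K) (ep_l' K)
theorem al_e1 : α K * e₁ K = 0 := cross21 K _ _ (al_r' K) (idem1' K)
theorem e2_al : e₂ K * α K = 0 := cross21 K _ _ (idem2' K) (al_l' K)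
theorem ab_e2 : αb K * e₂ K = 0 := cross12 K _ _ (ab_r' K) (idem2' K)
theorem e1_ab : e₁ K * αb K = 0 := cross12 K _ _ (idem1' K) (ab_l' K)

theorem mul3_of_eq {a b c : PreprojE K} (h : a * b = c) (t : PreprojE K) :
    a * (b * t) = c * t := by rw [← mul_assoc, h]

theorem mul3_of_zero {a b : PreprojE K} (h : a * b = 0) (t : PreprojE K) :
    a * (b * t) = 0 := by rw [← mul_assoc, h, zero_mul]

theorem ep_l't (t) : e₁ K * (ε K * t) = ε K * t := mul3_of_eq K (ep_l' K) t
theorem eb_l't (t) : e₂ K * (εb K * t) = εb K * t := mul3_of_eq K (eb_l' K) t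
theorem e1_eb't (t) : e₁ K * (εb K * t) = 0 := mul3_of_zero K (e1_eb K) t
theorem e2_ep't (t) : e₂ K * (ε K * t) = 0 := mul3_of_zero K (e2_ep K) t
theorem ep_eb't (t) : ε K * (εb K * t) = 0 := mul3_of_zero K (ep_eb K) t
theorem eb_ep't (t) : εb K * (ε K * t) = 0 := mul3_of_zero K (eb_ep K) t
theorem al_ep't (t) : α K * (ε K * t) = 0 := mul3_of_zero K (al_ep K) t
theorem ab_eb't (t) : αb K * (εb K * t) = 0 := mul3_of_zero K (ab_eb K) t
theorem xdef : x K = ε K * ε K + εb K * εb K := by rw [x, pow_two, pow_two]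

theorem x_comm (w : PreprojE K) : x K * w = w * x K := by
  obtain ⟨u, rfl⟩ := RingQuot.mkAlgHom_surjective K (RelE K) w
  induction u using FreeAlgebra.induction with
  | grade0 r =>
      rw [AlgHom.commutes]
      exact (Algebra.commutes r (x K)).symm
  | add a b ha hb => rw [map_add, mul_add, add_mul, ha, hb]
  | mul a b ha hb =>
      rw [map_mul, ← mul_assoc, ha, mul_assoc, hb, mul_assoc]
  | grade1 g =>
      show x K * of K g = of K g * x K
      cases g
      case e1 =>
        simp only [xdef, add_mul, mul_add, mul_assoc, ep_r', eb_e1, mul_zero, add_zero,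
          ep_l't, e1_eb't, zero_add]
      case e2 =>
        simp only [xdef, add_mul, mul_add, mul_assoc, eb_r', ep_e2, mul_zero, add_zero,
          eb_l't, e2_ep't, zero_add]
      case ep =>
        simp only [xdef, add_mul, mul_add, mul_assoc, eb_ep, mul_zero, add_zero,
          ep_eb't, zero_add]
      case eb =>
        simp only [xdef, add_mul, mul_add, mul_assoc, ep_eb, mul_zero, add_zero, zero_add,
          eb_ep't]
      case al =>
        rw [xdef, add_mul, mul_add]
        rw [mul_assoc (εb K), eb_al, mul_zero, add_zero,
          ← mul_assoc (α K) (ε K) (ε K), al_ep, zero_mul, zero_add]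
        have A : (ε K * ε K) * α K + (α K * αb K) * α K = 0 := by
          rw [← add_mul, rel1_eq, zero_mul]
        have B : α K * (εb K * εb K) + (α K * αb K) * α K = 0 := by
          rw [mul_assoc (α K) (αb K), ← mul_add, rel2_eq, mul_zero]
        exact add_right_cancel (A.trans B.symm)
      case ab =>
        rw [xdef, add_mul, mul_add]
        rw [mul_assoc (ε K), ep_ab, mul_zero, zero_add,
          ← mul_assoc (αb K) (εb K) (εb K), ab_eb, zero_mul, add_zero]
        have A : (εb K * εb K) * αb K + (αb K * α K) * αb K = 0 := by
          rw [← add_mul, rel2_eq, zero_mul]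
        have B : αb K * (ε K * ε K) + (αb K * α K) * αb K = 0 := by
          rw [mul_assoc (αb K) (α K), ← mul_add, rel1_eq, mul_zero]
        exact add_right_cancel (A.trans B.symm)

end Rels

section Rep

open MvPolynomial

variable (K : Type) [Field K]

noncomputable def av : MvPolynomial (Fin 2) K := X 0
noncomputable def cv : MvPolynomial (Fin 2) K := X 1

noncomputable def rep : Gen → Matrix (Fin 4) (Fin 4) (MvPolynomial (Fin 2) K)
  | .e1 => !![1,0,0,0; 0,1,0,0; 0,0,0,0; 0,0,0,0]
  | .e2 => !![0,0,0,0; 0,0,0,0; 0,0,1,0; 0,0,0,1]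
  | .ep => !![0,1,0,0; av K^2,0,0,0; 0,0,0,0; 0,0,0,0]
  | .eb => !![0,0,0,0; 0,0,0,0; 0,0,av K,0; 0,0,-cv K,-av K]
  | .al => !![0,0,1,0; 0,0,0,1; 0,0,0,0; 0,0,0,0]
  | .ab => !![0,0,0,0; 0,0,0,0; -av K^2,0,0,0; 0,-av K^2,0,0]

set_option maxHeartbeats 1000000 in
theorem hrel : ∀ ⦃u v : FreeAlgebra K Gen⦄, RelE K u v →
    FreeAlgebra.lift K (rep K) u = FreeAlgebra.lift K (rep K) v := by
  intro u v h
  induction h <;>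
    simp only [map_add, map_mul, map_one, map_zero, FreeAlgebra.lift_ι_apply, rep,
      mul_fin_four, add_fin_four, zero_fin_four, one_fin_four] <;>
    exact eq_fin_four (by ring) (by ring) (by ring) (by ring) (by ring) (by ring) (by ring)
      (by ring) (by ring) (by ring) (by ring) (by ring) (by ring) (by ring) (by ring) (by ring)

noncomputable def φ : PreprojE K →ₐ[K] Matrix (Fin 4) (Fin 4) (MvPolynomial (Fin 2) K) :=
  RingQuot.liftAlgHom K ⟨FreeAlgebra.lift K (rep K), hrel K⟩

theorem φ_of (g : Gen) : φ K (of K g) = rep K g := by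
  rw [PreprojE.of, φ, RingQuot.liftAlgHom_mkAlgHom_apply, FreeAlgebra.lift_ι_apply]

set_option maxHeartbeats 1000000 in
theorem φ_x : φ K (x K) = algebraMap _ _ (av K ^ 2) := by
  rw [xdef]
  simp only [map_add, map_mul, φ_of, rep, mul_fin_four, add_fin_four, algebraMap_fin_four,
    Algebra.algebraMap_self_apply]
  exact eq_fin_four (by ring) (by ring) (by ring) (by ring) (by ring) (by ring) (by ring)
    (by ring) (by ring) (by ring) (by ring) (by ring) (by ring) (by ring) (by ring) (by ring)

set_option maxHeartbeats 1000000 in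
theorem φ_z : φ K (z K) = algebraMap _ _ (av K ^ 2 * cv K) := by
  rw [PreprojE.z]
  simp only [map_add, map_mul, φ_of, rep, mul_fin_four, add_fin_four, algebraMap_fin_four,
    Algebra.algebraMap_self_apply]
  exact eq_fin_four (by ring) (by ring) (by ring) (by ring) (by ring) (by ring) (by ring)
    (by ring) (by ring) (by ring) (by ring) (by ring) (by ring) (by ring) (by ring) (by ring)

end Rep

end XZAux

open PreprojE in
/-- `x` and `z` are algebraically independent over `K`: the `K`-algebra homomorphism
`K[X,Y] → E`, `X ↦ x`, `Y ↦ z`, is injective; consequently the subalgebra generated by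
`x` and `z` is isomorphic to a polynomial ring in two variables over `K`. -/
theorem x_z_algebraically_independent (K : Type) [Field K] [IsAlgClosed K] :
    (∃ f : MvPolynomial (Fin 2) K →ₐ[K] PreprojE K,
      f (MvPolynomial.X 0) = x K ∧ f (MvPolynomial.X 1) = z K ∧ Function.Injective f) ∧
    Nonempty (MvPolynomial (Fin 2) K ≃ₐ[K]
      Algebra.adjoin K ({x K, z K} : Set (PreprojE K))) := by
  classical
  have hcomm : ∀ a ∈ ({x K, z K} : Set (PreprojE K)), ∀ b ∈ ({x K, z K} : Set (PreprojE K)),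
      a * b = b * a := by
    rintro a ha b hb
    simp only [Set.mem_insert_iff, Set.mem_singleton_iff] at ha hb
    rcases ha with rfl | rfl <;> rcases hb with rfl | rfl
    · rfl
    · exact XZAux.x_comm K (z K)
    · exact (XZAux.x_comm K (z K)).symm
    · rfl
  letI : CommRing (Algebra.adjoin K ({x K, z K} : Set (PreprojE K))) :=
    Algebra.adjoinCommRingOfComm K hcomm
  have hxmem : x K ∈ Algebra.adjoin K ({x K, z K} : Set (PreprojE K)) :=
    Algebra.subset_adjoin (by simp)
  have hzmem : z K ∈ Algebra.adjoin K ({x K, z K} : Set (PreprojE K)) :=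
    Algebra.subset_adjoin (by simp)
  set g : Fin 2 → Algebra.adjoin K ({x K, z K} : Set (PreprojE K)) :=
    ![⟨x K, hxmem⟩, ⟨z K, hzmem⟩] with hg
  set f : MvPolynomial (Fin 2) K →ₐ[K] PreprojE K :=
    (Subalgebra.val _).comp (MvPolynomial.aeval g) with hfdef
  have hf0 : f (MvPolynomial.X 0) = x K := by
    simp [hfdef, hg]
  have hf1 : f (MvPolynomial.X 1) = z K := by
    simp [hfdef, hg]
  have hkey : ∀ p : MvPolynomial (Fin 2) K,
      XZAux.φ K (f p) = algebraMap (MvPolynomial (Fin 2) K) _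
        (MvPolynomial.aeval ![XZAux.av K ^ 2, XZAux.av K ^ 2 * XZAux.cv K] p) := by
    intro p
    induction p using MvPolynomial.induction_on with
    | C r =>
        simp only [← MvPolynomial.algebraMap_eq, AlgHom.commutes, ← IsScalarTower.algebraMap_apply]
    | add p q hp hq => simp only [map_add, hp, hq]
    | mul_X p i hp =>
        simp only [map_mul, hp]
        congr 1
        fin_cases i
        · simp only [Fin.zero_eta]
          rw [hf0, XZAux.φ_x]; simp
        · simp only [Fin.mk_one]
          rw [hf1, XZAux.φ_z]; simp
  have hMinj : Function.Injective
      (algebraMap (MvPolynomial (Fin 2) K) (Matrix (Fin 4) (Fin 4) (MvPolynomial (Fin 2) K))) := by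
    intro r s h
    simpa [Matrix.algebraMap_matrix_apply] using Matrix.ext_iff.mpr h 0 0
  have hψ0 : ∀ p : MvPolynomial (Fin 2) K,
      MvPolynomial.aeval ![XZAux.av K ^ 2, XZAux.av K ^ 2 * XZAux.cv K] p = 0 → p = 0 := by
    intro p hp
    have hcomp : ∀ (v : Fin 2 → K) (q : MvPolynomial (Fin 2) K),
        MvPolynomial.eval v (MvPolynomial.aeval ![XZAux.av K ^ 2, XZAux.av K ^ 2 * XZAux.cv K] q)
          = MvPolynomial.eval ![v 0 ^ 2, v 0 ^ 2 * v 1] q := by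
      intro v q
      induction q using MvPolynomial.induction_on with
      | C r => simp
      | add a b ha hb => simp only [map_add, ha, hb]
      | mul_X a i ha =>
          rw [map_mul, map_mul, ha, map_mul]
          congr 1
          fin_cases i <;> simp [XZAux.av, XZAux.cv]
    have hXp : (MvPolynomial.X 0 : MvPolynomial (Fin 2) K) * p = 0 := by
      apply MvPolynomial.funext
      intro w
      rw [map_zero, map_mul]
      by_cases hw : w 0 = 0
      · rw [MvPolynomial.eval_X, hw, zero_mul]
      · obtain ⟨s, hs⟩ := IsAlgClosed.exists_pow_nat_eq (w 0) (n := 2) (by norm_num)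
        have h1 : MvPolynomial.eval ![s, w 1 / w 0]
            (MvPolynomial.aeval ![XZAux.av K ^ 2, XZAux.av K ^ 2 * XZAux.cv K] p) = 0 := by
          rw [hp, map_zero]
        rw [hcomp] at h1
        have hvec : ![(![s, w 1 / w 0]) 0 ^ 2, (![s, w 1 / w 0]) 0 ^ 2 * (![s, w 1 / w 0]) 1]
            = w := by
          funext i
          fin_cases i
          · simpa using hs
          · simp only [Matrix.cons_val_one, Matrix.cons_val_zero, Matrix.head_cons]
            rw [hs, mul_comm, div_mul_cancel₀ _ hw]
            rfl
        rw [hvec] at h1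
        rw [h1, mul_zero]
    rcases mul_eq_zero.mp hXp with h | h
    · exact absurd h (MvPolynomial.X_ne_zero 0)
    · exact h
  have hinj : Function.Injective f := by
    intro p q hpq
    have h1 : MvPolynomial.aeval ![XZAux.av K ^ 2, XZAux.av K ^ 2 * XZAux.cv K] p =
        MvPolynomial.aeval ![XZAux.av K ^ 2, XZAux.av K ^ 2 * XZAux.cv K] q :=
      hMinj (by rw [← hkey, ← hkey, hpq])
    have h2 : MvPolynomial.aeval ![XZAux.av K ^ 2, XZAux.av K ^ 2 * XZAux.cv K] (p - q) = 0 := by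
      rw [map_sub, h1, sub_self]
    exact sub_eq_zero.mp (hψ0 _ h2)
  refine ⟨⟨f, hf0, hf1, hinj⟩, ?_⟩
  have hrange : f.range = Algebra.adjoin K ({x K, z K} : Set (PreprojE K)) := by
    rw [hfdef, AlgHom.range_comp, ← Algebra.adjoin_range_eq_range_aeval, AlgHom.map_adjoin]
    congr 1
    rw [← Set.range_comp]
    have hvg : (Subalgebra.val _) ∘ g = ![x K, z K] := by
      funext i; fin_cases i <;> rfl
    rw [hvg]
    ext w
    simp only [Set.mem_insert_iff, Set.mem_singleton_iff, Set.mem_range]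
    constructor
    · rintro ⟨i, rfl⟩
      fin_cases i
      · exact Or.inl rfl
      · exact Or.inr rfl
    · rintro (rfl | rfl)
      · exact ⟨0, rfl⟩
      · exact ⟨1, rfl⟩
  exact ⟨(AlgEquiv.ofInjective f hinj).trans (Subalgebra.equivOfEq _ _ hrange)⟩
end
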